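/- arXiv:2305.05826 — 6 statements merged into one kernel-verified Lean document; each statement's English description precedes it below -/
import Mathlib

section
/- There exist absolute constants c, c' > 0 such that the following holds. Let 𝟏 ∈ ℝ^{n×n} be the all-ones matrix, let ε ∈ (0, 1/2) satisfy ε ≥ c/√n, and let S ∈ ℝ^{n×n} satisfy ‖𝟏 − S‖₂ ≤ εn. Then S has at least c'·n/ε² nonzero entries. -/
open Matrix BigOperators

/-- The spectral (operator) norm of a real square matrix. -/
noncomputable def specNorm {m : ℕ} (M : Matrix (Fin m) (Fin m) ℝ) : ℝ :=
  ‖LinearMap.toContinuousLinearMap (Matrix.toEuclideanLin M)‖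

/-- The `n × n` all-ones matrix. -/
def allOnes (m : ℕ) : Matrix (Fin m) (Fin m) ℝ := Matrix.of fun _ _ => 1

/-- Euclidean norm of a vector in `ℝⁿ`. -/
noncomputable def vnorm {m : ℕ} (x : Fin m → ℝ) : ℝ := Real.sqrt (∑ i, (x i) ^ 2)

/-- The (unsorted) singular values of a real square matrix: square roots of the
eigenvalues of `Aᵀ A`. -/
noncomputable def svRaw {m : ℕ} (A : Matrix (Fin m) (Fin m) ℝ) : Fin m → ℝ :=
  fun j => Real.sqrt ((Matrix.isHermitian_conjTranspose_mul_self A).eigenvalues j)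

/-- `sval A i` is the `i`-th largest singular value of `A` (1-based indexing);
it is `0` for `i = 0` and for `i > m`. -/
noncomputable def sval {m : ℕ} (A : Matrix (Fin m) (Fin m) ℝ) (i : ℕ) : ℝ :=
  if h : 1 ≤ i ∧ i ≤ m then (svRaw A ∘ Tuple.sort (svRaw A)) ⟨m - i, by omega⟩ else 0

/-- The nuclear (Schatten-1) norm of a real square matrix: the sum of its singular values. -/
noncomputable def nuclearNorm {m : ℕ} (A : Matrix (Fin m) (Fin m) ℝ) : ℝ :=
  ∑ j, svRaw A j

/-- The smallest eigenvalue of a symmetric real matrix, via the Rayleigh quotient. -/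
noncomputable def lamMin {m : ℕ} (A : Matrix (Fin m) (Fin m) ℝ) : ℝ :=
  sInf {r : ℝ | ∃ x : Fin m → ℝ, vnorm x = 1 ∧ r = x ⬝ᵥ (A *ᵥ x)}

set_option maxHeartbeats 1000000
lemma mulVec_sq_sum_le {n : ℕ} (M : Matrix (Fin n) (Fin n) ℝ) (x : Fin n → ℝ) :
    ∑ i, (M.mulVec x i)^2 ≤ specNorm M ^ 2 * ∑ i, (x i)^2 := by
  set y : EuclideanSpace ℝ (Fin n) := (WithLp.equiv 2 (Fin n → ℝ)).symm x with hy
  have h := (LinearMap.toContinuousLinearMap (Matrix.toEuclideanLin M)).le_opNorm y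
  rw [LinearMap.coe_toContinuousLinearMap'] at h
  change ‖WithLp.toLp 2 (M *ᵥ x)‖ ≤ _ * ‖y‖ at h
  rw [EuclideanSpace.norm_eq, EuclideanSpace.norm_eq] at h
  simp only [WithLp.equiv_symm_apply, WithLp.ofLp_toLp, Real.norm_eq_abs, sq_abs] at h
  have h1 : (0:ℝ) ≤ ∑ i, (M.mulVec x i)^2 := Finset.sum_nonneg fun _ _ => sq_nonneg _
  have h2 : (0:ℝ) ≤ ∑ i, (x i)^2 := Finset.sum_nonneg fun _ _ => sq_nonneg _
  have := pow_le_pow_left₀ (Real.sqrt_nonneg _) h 2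
  rw [Real.sq_sqrt h1, mul_pow] at this
  simp only [hy, WithLp.equiv_symm_apply, WithLp.ofLp_toLp] at this
  rw [Real.sq_sqrt h2] at this
  exact this


/-- **Sparsity lower bound.** -/
theorem sparsity_lower_bound_psd :
    ∃ c c' : ℝ, 0 < c ∧ 0 < c' ∧ ∀ (n : ℕ) (ε : ℝ),
      ε ∈ Set.Ioo (0 : ℝ) (1 / 2) → c / Real.sqrt n ≤ ε →
      ∀ S : Matrix (Fin n) (Fin n) ℝ, specNorm (allOnes n - S) ≤ ε * n →
        c' * n / ε ^ 2 ≤ (({p : Fin n × Fin n | S p.1 p.2 ≠ 0} : Set _).ncard : ℝ) := by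
  classical
  refine ⟨1, 1/16, one_pos, by norm_num, ?_⟩
  rintro n ε ⟨hε0, hε2⟩ hc S hS
  rcases Nat.eq_zero_or_pos n with hn | hn
  · subst hn
    simp only [Nat.cast_zero, mul_zero, zero_div]
    positivity
  have hn0 : (0:ℝ) < n := by exact_mod_cast hn
  set E := allOnes n - S with hE
  have hSij : ∀ i j, S i j = 1 - E i j := by
    intro i j; simp [hE, allOnes]
  -- ε² n ≥ 1
  have hεn : 1 ≤ ε^2 * n := by
    have hs : (0:ℝ) < Real.sqrt n := Real.sqrt_pos.mpr hn0
    have h1 : 1 ≤ ε * Real.sqrt n := by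
      rw [div_le_iff₀ hs] at hc; linarith
    have := mul_le_mul h1 h1 (by linarith) (by positivity)
    calc (1:ℝ) = 1 * 1 := by ring
    _ ≤ (ε * Real.sqrt n) * (ε * Real.sqrt n) := this
    _ = ε^2 * (Real.sqrt n * Real.sqrt n) := by ring
    _ = ε^2 * n := by rw [Real.mul_self_sqrt hn0.le]
  have hspec : (0:ℝ) ≤ specNorm E := norm_nonneg _
  -- Frobenius bound: ∑_j ∑_i E i j ^ 2 ≤ ε² n³
  have hcol : ∀ j, ∑ i, (E i j)^2 ≤ ε^2 * n^2 := by
    intro j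
    have h := mulVec_sq_sum_le E (Pi.single j 1)
    have h1 : ∀ i, E.mulVec (Pi.single j 1) i = E i j := by
      intro i
      simp [Matrix.mulVec_single]
    have h2 : ∑ i, ((Pi.single j 1 : Fin n → ℝ) i)^2 = 1 := by
      rw [Finset.sum_eq_single j] <;> simp +contextual [Pi.single_apply]
    rw [h2, mul_one] at h
    simp only [h1] at h
    calc ∑ i, (E i j)^2 ≤ specNorm E ^ 2 := h
    _ ≤ (ε * n)^2 := pow_le_pow_left₀ hspec hS 2
    _ = ε^2 * n^2 := by ring
  have hFrob : ∑ i, ∑ j, (E i j)^2 ≤ ε^2 * n^3 := by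
    rw [Finset.sum_comm]
    calc ∑ j, ∑ i, (E i j)^2 ≤ ∑ _j : Fin n, ε^2 * n^2 :=
      Finset.sum_le_sum fun j _ => hcol j
    _ = n * (ε^2 * n^2) := by simp [Finset.sum_const, mul_comm]
    _ = ε^2 * n^3 := by ring
  -- total sum bound: ∑∑ E ≤ ε n²
  have hones : ∀ i, E.mulVec (fun _ => 1) i = ∑ j, E i j := by
    intro i; simp [Matrix.mulVec, dotProduct]
  have hrow_sq : ∑ i, (∑ j, E i j)^2 ≤ ε^2 * n^3 := by
    have h := mulVec_sq_sum_le E (fun _ => 1)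
    simp only [hones, one_pow, Finset.sum_const, Finset.card_univ, Fintype.card_fin,
      nsmul_eq_mul, mul_one] at h
    calc ∑ i, (∑ j, E i j)^2 ≤ specNorm E ^2 * n := h
    _ ≤ (ε*n)^2 * n := by
        have := pow_le_pow_left₀ hspec hS 2
        nlinarith
    _ = ε^2 * n^3 := by ring
  have htot : ∑ i, ∑ j, E i j ≤ ε * n^2 := by
    have hcs := Finset.sum_mul_sq_le_sq_mul_sq Finset.univ (fun i => ∑ j, E i j)
      (fun _ => (1:ℝ))
    simp only [mul_one, one_pow, Finset.sum_const, Finset.card_univ, Fintype.card_fin,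
      nsmul_eq_mul, mul_one] at hcs
    have h2 : (∑ i, ∑ j, E i j)^2 ≤ (ε * n^2)^2 := by
      calc (∑ i, ∑ j, E i j)^2 ≤ (∑ i, (∑ j, E i j)^2) * n := hcs
      _ ≤ (ε^2 * n^3) * n := by nlinarith
      _ = (ε * n^2)^2 := by ring
    calc ∑ i, ∑ j, E i j ≤ |∑ i, ∑ j, E i j| := le_abs_self _
    _ = Real.sqrt ((∑ i, ∑ j, E i j)^2) := (Real.sqrt_sq_eq_abs _).symm
    _ ≤ Real.sqrt ((ε * n^2)^2) := Real.sqrt_le_sqrt h2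
    _ = ε * n^2 := Real.sqrt_sq (by positivity)
  -- sum of S large
  have hSsum : (n:ℝ)^2 / 2 ≤ ∑ i, ∑ j, S i j := by
    have : ∑ i, ∑ j, S i j = n^2 - ∑ i, ∑ j, E i j := by
      simp only [hSij, Finset.sum_sub_distrib, Finset.sum_const, Finset.card_univ,
        Fintype.card_fin, nsmul_eq_mul, mul_one]
      ring
    rw [this]
    nlinarith
  -- sum of squares of S small
  have hSsq : ∑ i, ∑ j, (S i j)^2 ≤ 4 * ε^2 * n^3 := by
    have h1 : ∑ i, ∑ j, (S i j)^2 ≤ ∑ i, ∑ j, (2 + 2 * (E i j)^2) := by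
      refine Finset.sum_le_sum fun i _ => Finset.sum_le_sum fun j _ => ?_
      rw [hSij]; nlinarith [sq_nonneg (1 + E i j)]
    have h2 : ∑ i, ∑ j, ((2:ℝ) + 2 * (E i j)^2) = 2 * n^2 + 2 * ∑ i, ∑ j, (E i j)^2 := by
      simp only [Finset.sum_add_distrib, Finset.sum_const, Finset.card_univ,
        Fintype.card_fin, nsmul_eq_mul, ← Finset.mul_sum]
      ring
    have h3 : (n:ℝ)^2 ≤ ε^2 * n^3 := by nlinarith
    calc ∑ i, ∑ j, (S i j)^2 ≤ 2 * n^2 + 2 * ∑ i, ∑ j, (E i j)^2 := by rw [← h2]; exact h1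
    _ ≤ 2 * (ε^2 * n^3) + 2 * (ε^2 * n^3) := by nlinarith
    _ = 4 * ε^2 * n^3 := by ring
  -- support counting
  set T := Finset.univ.filter (fun p : Fin n × Fin n => S p.1 p.2 ≠ 0) with hT
  have hkcard : (({p : Fin n × Fin n | S p.1 p.2 ≠ 0} : Set _).ncard : ℝ) = T.card := by
    rw [Set.ncard_eq_toFinset_card']
    congr 1
    simp [hT]
  have hprod : ∑ p : Fin n × Fin n, S p.1 p.2 = ∑ i, ∑ j, S i j :=
    Fintype.sum_prod_type' (f := fun i j => S i j)
  have hprod2 : ∑ p : Fin n × Fin n, (S p.1 p.2)^2 = ∑ i, ∑ j, (S i j)^2 :=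
    Fintype.sum_prod_type' (f := fun i j => (S i j)^2)
  have hsum_T : ∑ p ∈ T, S p.1 p.2 = ∑ i, ∑ j, S i j := by
    rw [← hprod, hT]
    exact Finset.sum_filter_of_ne (fun p _ h => h)
  have hsq_T : ∑ p ∈ T, (S p.1 p.2)^2 ≤ ∑ i, ∑ j, (S i j)^2 := by
    rw [← hprod2]
    exact Finset.sum_le_sum_of_subset_of_nonneg (Finset.filter_subset _ _)
      (fun _ _ _ => sq_nonneg _)
  have hcs := Finset.sum_mul_sq_le_sq_mul_sq T (fun p => S p.1 p.2) (fun _ => (1:ℝ))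
  simp only [mul_one, one_pow, Finset.sum_const, nsmul_eq_mul, mul_one] at hcs
  rw [hsum_T] at hcs
  have hkey : ((n:ℝ)^2/2)^2 ≤ (4 * ε^2 * n^3) * T.card := by
    have hc0 : (0:ℝ) ≤ (T.card : ℝ) := Nat.cast_nonneg _
    calc ((n:ℝ)^2/2)^2 ≤ (∑ i, ∑ j, S i j)^2 := by nlinarith
    _ ≤ (∑ p ∈ T, (S p.1 p.2)^2) * T.card := hcs
    _ ≤ (4 * ε^2 * n^3) * T.card := by nlinarith
  rw [hkcard, div_le_iff₀ (by positivity : (0:ℝ) < ε^2)]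
  nlinarith [hkey, hn0, pow_pos hn0 3, sq_nonneg ε, Nat.cast_nonneg (α := ℝ) T.card]
end

section
/- There is an absolute constant c > 0 such that the following holds for every n and every ε with n^{-1/4} < ε < 1/4. Let Q ⊆ [n]×[n] be a set of matrix positions and let f be a function from n×n real matrices to ℝ that depends only on the entries in Q, i.e., f(A) = f(B) whenever A_{ij} = B_{ij} for all (i,j) ∈ Q. If for every matrix A ∈ ℝ^{n×n} with ‖A‖∞ ≤ 1 one has |f(A) − σ₁(A)| ≤ ε·max(n, ‖A‖₁), then |Q| ≥ c·n/ε⁴. (This is the query lower bound for deterministic non-adaptive spectral norm approximation.) -/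
open Matrix BigOperators

/-! ### Auxiliary lemmas -/

lemma QLB.eig_nonneg {n : ℕ} (A : Matrix (Fin n) (Fin n) ℝ) (j : Fin n) :
    0 ≤ (Matrix.isHermitian_conjTranspose_mul_self A).eigenvalues j := by
  have hpsd : (Aᴴ * A).PosSemidef := Matrix.posSemidef_conjTranspose_mul_self A
  exact hpsd.eigenvalues_nonneg j

lemma QLB.sq_svRaw {n : ℕ} (A : Matrix (Fin n) (Fin n) ℝ) (j : Fin n) :
    svRaw A j ^ 2 = (Matrix.isHermitian_conjTranspose_mul_self A).eigenvalues j := by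
  rw [svRaw, Real.sq_sqrt (QLB.eig_nonneg A j)]

lemma QLB.conjT_eq_transpose {n : ℕ} (A : Matrix (Fin n) (Fin n) ℝ) : Aᴴ = Aᵀ := by
  ext i j; simp [Matrix.conjTranspose_apply]

lemma QLB.trace_tmul {n : ℕ} (A : Matrix (Fin n) (Fin n) ℝ) :
    (Aᴴ * A).trace = ∑ i, ∑ j, (A i j) ^ 2 := by
  rw [QLB.conjT_eq_transpose]
  rw [Matrix.trace]
  rw [Finset.sum_comm]
  congr 1
  ext j
  simp [Matrix.diag, Matrix.mul_apply, sq]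

lemma QLB.sval_one_spec {n : ℕ} (hn : 1 ≤ n) (A : Matrix (Fin n) (Fin n) ℝ) :
    (∃ j₀, sval A 1 = svRaw A j₀) ∧ ∀ j, svRaw A j ≤ sval A 1 := by
  have hc : 1 ≤ 1 ∧ 1 ≤ n := ⟨le_refl 1, hn⟩
  have hs : sval A 1 = (svRaw A ∘ Tuple.sort (svRaw A)) ⟨n - 1, by omega⟩ := by
    rw [sval, dif_pos hc]
  constructor
  · exact ⟨_, hs⟩
  · intro j
    have h1 : svRaw A j = (svRaw A ∘ Tuple.sort (svRaw A)) ((Tuple.sort (svRaw A))⁻¹ j) := by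
      simp
    rw [hs, h1]
    refine Tuple.monotone_sort (svRaw A) ?_
    have := ((Tuple.sort (svRaw A))⁻¹ j).isLt
    exact Fin.le_def.mpr (by simp; omega)

lemma QLB.trace_eq_sum_eig {n : ℕ} (A : Matrix (Fin n) (Fin n) ℝ) (hA : A.IsHermitian) :
    ∑ i, hA.eigenvalues i = A.trace := by
  have h := hA.spectral_theorem
  have h2 : A.trace = (Matrix.diagonal (RCLike.ofReal ∘ hA.eigenvalues)).trace := by
    simp [hA.trace_eq_sum_eigenvalues, Matrix.trace_diagonal]
  rw [h2, Matrix.trace_diagonal]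
  simp [RCLike.ofReal]

lemma QLB.sum_eig_eq_frob {n : ℕ} (A : Matrix (Fin n) (Fin n) ℝ) :
    ∑ j, (Matrix.isHermitian_conjTranspose_mul_self A).eigenvalues j = ∑ i, ∑ j, (A i j) ^ 2 := by
  rw [QLB.trace_eq_sum_eig _ (Matrix.isHermitian_conjTranspose_mul_self A), QLB.trace_tmul]

lemma QLB.frob_nonneg {n : ℕ} (A : Matrix (Fin n) (Fin n) ℝ) : 0 ≤ ∑ i, ∑ j, (A i j) ^ 2 := by
  positivity

lemma QLB.sval_one_le_frob {n : ℕ} (hn : 1 ≤ n) (A : Matrix (Fin n) (Fin n) ℝ) :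
    sval A 1 ≤ Real.sqrt (∑ i, ∑ j, (A i j) ^ 2) := by
  obtain ⟨⟨j₀, hj₀⟩, -⟩ := QLB.sval_one_spec hn A
  rw [hj₀, svRaw]
  apply Real.sqrt_le_sqrt
  rw [← QLB.sum_eig_eq_frob]
  exact Finset.single_le_sum (fun j _ => QLB.eig_nonneg A j) (Finset.mem_univ j₀)

lemma QLB.sval_one_nonneg {n : ℕ} (hn : 1 ≤ n) (A : Matrix (Fin n) (Fin n) ℝ) :
    0 ≤ sval A 1 := by
  obtain ⟨⟨j₀, hj₀⟩, -⟩ := QLB.sval_one_spec hn A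
  rw [hj₀, svRaw]; exact Real.sqrt_nonneg _

lemma QLB.card_nonzero_eig_eq_rank {n : ℕ} (A : Matrix (Fin n) (Fin n) ℝ) :
    (Finset.univ.filter fun j => (Matrix.isHermitian_conjTranspose_mul_self A).eigenvalues j ≠ 0).card
      = A.rank := by
  rw [← Matrix.rank_transpose_mul_self A, ← QLB.conjT_eq_transpose,
    (Matrix.isHermitian_conjTranspose_mul_self A).rank_eq_card_non_zero_eigs]
  exact (Fintype.card_subtype _).symm

lemma QLB.nuclearNorm_le_sqrt_rank_mul_frob {n : ℕ} (A : Matrix (Fin n) (Fin n) ℝ) :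
    nuclearNorm A ≤ Real.sqrt ((A.rank : ℝ) * ∑ i, ∑ j, (A i j) ^ 2) := by
  classical
  set lam := (Matrix.isHermitian_conjTranspose_mul_self A).eigenvalues with hlam
  set Z := Finset.univ.filter fun j => lam j ≠ 0 with hZ
  have hsub : nuclearNorm A = ∑ j ∈ Z, svRaw A j := by
    rw [nuclearNorm]
    refine (Finset.sum_subset (Finset.subset_univ Z) ?_).symm
    intro j _ hj
    have : lam j = 0 := by
      by_contra h
      exact hj (Finset.mem_filter.mpr ⟨Finset.mem_univ j, h⟩)
    rw [svRaw, ← hlam, this, Real.sqrt_zero]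
  rw [hsub]
  have h1 : (∑ j ∈ Z, svRaw A j) ^ 2 ≤ (Z.card : ℝ) * ∑ j ∈ Z, (svRaw A j) ^ 2 :=
    sq_sum_le_card_mul_sum_sq
  have h2 : ∑ j ∈ Z, (svRaw A j) ^ 2 ≤ ∑ i, ∑ j, (A i j) ^ 2 := by
    rw [← QLB.sum_eig_eq_frob A]
    calc ∑ j ∈ Z, (svRaw A j) ^ 2 = ∑ j ∈ Z, lam j := by
          exact Finset.sum_congr rfl fun j _ => QLB.sq_svRaw A j
      _ ≤ ∑ j, lam j := Finset.sum_le_sum_of_subset_of_nonneg (Finset.subset_univ Z)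
          (fun j _ _ => QLB.eig_nonneg A j)
  refine Real.le_sqrt (Finset.sum_nonneg fun j _ => Real.sqrt_nonneg _) ?_ |>.mpr ?_
  · positivity
  · calc (∑ j ∈ Z, svRaw A j) ^ 2 ≤ (Z.card : ℝ) * ∑ j ∈ Z, (svRaw A j) ^ 2 := h1
      _ ≤ (A.rank : ℝ) * ∑ i, ∑ j, (A i j) ^ 2 := by
          rw [← QLB.card_nonzero_eig_eq_rank A]
          exact mul_le_mul (le_refl _) h2 (Finset.sum_nonneg fun j _ => sq_nonneg _)
            (Nat.cast_nonneg _)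

lemma QLB.frob_le_sval_one_of_rank_le_one {n : ℕ} (hn : 1 ≤ n) (A : Matrix (Fin n) (Fin n) ℝ)
    (hr : A.rank ≤ 1) : Real.sqrt (∑ i, ∑ j, (A i j) ^ 2) ≤ sval A 1 := by
  classical
  by_cases h0 : (∑ i, ∑ j, (A i j) ^ 2) = 0
  · rw [h0, Real.sqrt_zero]; exact QLB.sval_one_nonneg hn A
  · have hsumZ : ∑ j ∈ (Finset.univ.filter fun j => (Matrix.isHermitian_conjTranspose_mul_self A).eigenvalues j ≠ 0),
        (Matrix.isHermitian_conjTranspose_mul_self A).eigenvalues j = ∑ i, ∑ j, (A i j) ^ 2 := by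
      rw [Finset.sum_filter_ne_zero, QLB.sum_eig_eq_frob]
    have hZne : (Finset.univ.filter fun j => (Matrix.isHermitian_conjTranspose_mul_self A).eigenvalues j ≠ 0).Nonempty := by
      by_contra h
      rw [Finset.not_nonempty_iff_eq_empty] at h
      rw [h, Finset.sum_empty] at hsumZ
      exact h0 hsumZ.symm
    have hZcard : (Finset.univ.filter fun j => (Matrix.isHermitian_conjTranspose_mul_self A).eigenvalues j ≠ 0).card = 1 := by
      have h1 := QLB.card_nonzero_eig_eq_rank A
      have h2 := Finset.card_pos.mpr hZne
      omega
    obtain ⟨j₀, hj₀⟩ := Finset.card_eq_one.mp hZcard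
    have hlamj : (Matrix.isHermitian_conjTranspose_mul_self A).eigenvalues j₀ = ∑ i, ∑ j, (A i j) ^ 2 := by
      rw [← hsumZ, hj₀, Finset.sum_singleton]
    obtain ⟨-, hmax⟩ := QLB.sval_one_spec hn A
    calc Real.sqrt (∑ i, ∑ j, (A i j) ^ 2) = svRaw A j₀ := by rw [svRaw, hlamj]
      _ ≤ sval A 1 := hmax j₀

lemma QLB.rank_le_card_support {n : ℕ} (S : Finset (Fin n)) (B : Matrix (Fin n) (Fin n) ℝ)
    (h : ∀ i j, i ∉ S → B i j = 0) : B.rank ≤ S.card := by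
  classical
  let C : Matrix (Fin n) {x // x ∈ S} ℝ := fun i s => if i = (s : Fin n) then 1 else 0
  let D : Matrix {x // x ∈ S} (Fin n) ℝ := fun s j => B s j
  have hBCD : B = C * D := by
    ext i j
    rw [Matrix.mul_apply]
    by_cases hi : i ∈ S
    · rw [Finset.sum_eq_single (⟨i, hi⟩ : {x // x ∈ S})]
      · simp [C, D]
      · intro s _ hs
        have : ¬ (i = (s : Fin n)) := by
          intro he; exact hs (by ext; simp [he.symm])
        simp [C, D, this]
      · intro habs; exact absurd (Finset.mem_univ _) habs
    · rw [h i j hi]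
      symm; apply Finset.sum_eq_zero
      intro s _
      have : ¬ (i = (s : Fin n)) := fun he => hi (he ▸ s.2)
      simp [C, this]
  calc B.rank = (C * D).rank := by rw [hBCD]
    _ ≤ D.rank := Matrix.rank_mul_le_right C D
    _ ≤ Fintype.card {x // x ∈ S} := Matrix.rank_le_card_height D
    _ = S.card := Fintype.card_coe S

lemma QLB.rank_indicator_le_one {n : ℕ} (S : Finset (Fin n)) :
    (Matrix.of fun i (_ : Fin n) => if i ∈ S then (1:ℝ) else 0).rank ≤ 1 := by
  classical
  let C : Matrix (Fin n) (Fin 1) ℝ := fun i _ => if i ∈ S then 1 else 0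
  let D : Matrix (Fin 1) (Fin n) ℝ := fun _ _ => 1
  have h : (Matrix.of fun i (_ : Fin n) => if i ∈ S then (1:ℝ) else 0) = C * D := by
    ext i j
    rw [Matrix.mul_apply]; simp [C, D]
  calc _ = (C * D).rank := by rw [h]
    _ ≤ C.rank := Matrix.rank_mul_le_left C D
    _ ≤ Fintype.card (Fin 1) := Matrix.rank_le_card_width C
    _ = 1 := by simp

lemma QLB.row_count {n : ℕ} (Q : Finset (Fin n × Fin n)) (i : Fin n) :
    ∑ j, (if (i, j) ∈ Q then (1:ℝ) else 0) = ((Q.filter fun p => p.1 = i).card : ℝ) := by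
  rw [Finset.sum_boole]
  norm_num
  apply Finset.card_bij (fun j _ => (i, j))
  · intro j hj
    simp only [Finset.mem_filter] at hj ⊢
    exact ⟨hj.2, trivial⟩
  · intro a _ b _ h
    exact (Prod.mk.injEq _ _ _ _).mp h |>.2
  · intro p hp
    simp only [Finset.mem_filter] at hp
    have hip : (i, p.2) = p := Prod.ext hp.2.symm rfl
    exact ⟨p.2, by simp [hip ▸ hp.1], hip⟩

lemma QLB.le_of_sq_le_sq {a b : ℝ} (ha : 0 ≤ a) (hb : 0 ≤ b) (h : a^2 ≤ b^2) : a ≤ b := by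
  nlinarith

lemma QLB.lt_of_sq_lt_sq {a b : ℝ} (ha : 0 ≤ a) (hb : 0 ≤ b) (h : a^2 < b^2) : a < b := by
  nlinarith

lemma QLB.numeric1 {N ε : ℝ} (hN1 : 1 ≤ N) (h1 : N ^ (-(1/4) : ℝ) < ε) (h2 : ε < 1/4) :
    0 < ε ∧ 256 < N ∧ 1 < ε^4 * N ∧ 1 < ε^2 * Real.sqrt N := by
  have hN0 : (0:ℝ) < N := by linarith only [hN1]
  have hε0 : 0 < ε := lt_of_le_of_lt (Real.rpow_nonneg (by positivity) _) h1
  set t := N ^ ((1/4 : ℝ)) with ht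
  have ht0 : 0 < t := Real.rpow_pos_of_pos hN0 _
  have htneg : N ^ (-(1/4) : ℝ) = t⁻¹ := by rw [Real.rpow_neg hN0.le]
  have ht4 : t^4 = N := by
    rw [ht, ← Real.rpow_natCast (N ^ ((1/4:ℝ))) 4, ← Real.rpow_mul hN0.le]
    norm_num
  have hεt : 1 < ε * t := by
    rw [htneg] at h1
    have h := mul_lt_mul_of_pos_right h1 ht0
    rwa [inv_mul_cancel₀ ht0.ne'] at h
  have ht4' : 4 < t := by
    rw [htneg] at h1
    have h := h1.trans h2
    have h1' := mul_lt_mul_of_pos_right h ht0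
    rw [inv_mul_cancel₀ ht0.ne'] at h1'
    linarith
  refine ⟨hε0, ?_, ?_, ?_⟩
  · have ha : 16 < t^2 := by nlinarith
    nlinarith [ht4, ha]
  · have h1' : 1 < (ε*t)^4 := one_lt_pow₀ hεt (by norm_num)
    rw [mul_pow, ht4] at h1'
    exact h1'
  · have h1' : 1 < (ε*t)^2 := one_lt_pow₀ hεt (by norm_num)
    rw [mul_pow] at h1'
    have hst : Real.sqrt N = t^2 := by
      rw [← ht4, show t^4 = (t^2)^2 by ring]
      exact Real.sqrt_sq (by positivity)
    rw [hst]
    linarith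

set_option maxHeartbeats 2000000 in
/-- **Non-adaptive query lower bound for deterministic spectral norm approximation.**
Any function of a fixed set `Q` of matrix entries that approximates `σ₁(A)` to error
`ε · max(n, ‖A‖₁)` on all bounded-entry matrices must have `|Q| = Ω(n/ε⁴)`. -/
theorem query_lower_bound_nonadaptive :
    ∃ c : ℝ, 0 < c ∧ ∀ (n : ℕ) (ε : ℝ),
      (n : ℝ) ^ (-(1 / 4) : ℝ) < ε → ε < 1 / 4 →
      ∀ (Q : Finset (Fin n × Fin n)) (f : Matrix (Fin n) (Fin n) ℝ → ℝ),
        (∀ A B : Matrix (Fin n) (Fin n) ℝ, (∀ p ∈ Q, A p.1 p.2 = B p.1 p.2) → f A = f B) →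
        (∀ A : Matrix (Fin n) (Fin n) ℝ, (∀ i j, |A i j| ≤ 1) →
          |f A - sval A 1| ≤ ε * max (n : ℝ) (nuclearNorm A)) →
        c * n / ε ^ 4 ≤ (Q.card : ℝ) := by
  classical
  refine ⟨1/1024, by norm_num, ?_⟩
  intro n ε hε1 hε2 Q f hdep happrox
  rcases Nat.eq_zero_or_pos n with hn0 | hn1
  · subst hn0; simp
  by_contra hcon
  push_neg at hcon
  have hN1 : (1:ℝ) ≤ (n:ℝ) := by
    have : (1:ℕ) ≤ n := hn1
    exact_mod_cast this
  obtain ⟨hε0, hN256, hε4N, hε2s⟩ := QLB.numeric1 hN1 hε1 hε2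
  set N := (n:ℝ) with hN
  clear_value N
  have hN0 : (0:ℝ) < N := by linarith only [hN1]
  set s := Real.sqrt N with hsdef
  have hs0 : 0 ≤ s := Real.sqrt_nonneg N
  have hs2 : s^2 = N := Real.sq_sqrt hN0.le
  clear_value s
  have hsN : s ≤ N := by nlinarith only [hs2, hs0, hN1]
  have hsleN : s ≤ ε^2 * N := by nlinarith only [hε2s, hs0, hs2]
  have hε2N1 : 1 ≤ ε^2*N := by nlinarith only [hε2s, hsN, hε0, hs0, sq_nonneg ε]
  -- the number of planted rows
  obtain ⟨m, hM1, hM2⟩ : ∃ m : ℕ, 7*ε^2*N ≤ (m:ℝ) ∧ (m:ℝ) ≤ 7*ε^2*N + 1 :=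
    ⟨⌈(7:ℝ) * ε^2 * N⌉₊, by rw [hN]; exact Nat.le_ceil _,
      by rw [hN]; exact le_of_lt (Nat.ceil_lt_add_one (by positivity))⟩
  set M := (m:ℝ) with hMdef
  clear_value M
  have hM3 : M ≤ 8*ε^2*N := by linarith only [hM1, hM2, hε2N1]
  have hε216 : ε^2 < 1/16 := by nlinarith only [sq_nonneg (ε - 1/4), sq_nonneg (ε + 1/4), hε2, hε0]
  have hMN2 : M ≤ N/2 := by
    have h7 : 7*ε^2*N ≤ 7*(1/16)*N := by
      have h8 : ε^2 ≤ 1/16 := le_of_lt hε216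
      nlinarith only [h8, hN0]
    linarith only [h7, hM2, hN256]
  have hM0 : (0:ℝ) < M := lt_of_lt_of_le (by positivity) hM1
  -- row weights
  set w : Fin n → ℕ := fun i => (Q.filter fun p => p.1 = i).card with hw
  have hwsum : ∑ i, w i = Q.card :=
    (Finset.card_eq_sum_card_fiberwise (fun p _ => Finset.mem_univ p.1)).symm
  clear_value w
  set q := (Q.card : ℝ) with hqdef
  clear_value q
  have hq0 : (0:ℝ) ≤ q := by rw [hqdef]; exact Nat.cast_nonneg _
  -- good rows: rows with few queries
  set G := Finset.univ.filter (fun i => (w i : ℝ) * N ≤ 2 * q) with hG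
  clear_value G
  have hmG : m ≤ G.card := by
    set F := Finset.univ.filter (fun i => ¬ ((w i : ℝ) * N ≤ 2 * q)) with hF
    clear_value F
    have hFle : (F.card : ℝ) ≤ N/2 := by
      by_cases hq : q = 0
      · have hQ0 : Q.card = 0 := by rw [hqdef] at hq; exact_mod_cast hq
        have hwz : ∀ i ∈ Finset.univ, w i = 0 := by
          rw [← Finset.sum_eq_zero_iff, hwsum, hQ0]
        have : F = ∅ := by
          rw [hF]
          apply Finset.filter_false_of_mem
          intro i _
          rw [hwz i (Finset.mem_univ i), hq]
          push_neg
          norm_num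
        rw [this]
        simp
        positivity
      · have hqpos : (0:ℝ) < q := lt_of_le_of_ne hq0 (Ne.symm hq)
        have h1 : ∀ i ∈ F, (2*q)/N ≤ (w i : ℝ) := by
          intro i hi
          rw [hF, Finset.mem_filter] at hi
          rw [div_le_iff₀ hN0]
          push_neg at hi
          linarith only [hi.2]
        have h2 := Finset.card_nsmul_le_sum F (fun i => (w i:ℝ)) ((2*q)/N) h1
        rw [nsmul_eq_mul] at h2
        have h3 : ∑ i ∈ F, (w i:ℝ) ≤ q := by
          have h4 : ∑ i ∈ F, (w i:ℝ) ≤ ∑ i, (w i:ℝ) :=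
            Finset.sum_le_sum_of_subset_of_nonneg (Finset.subset_univ F)
              (fun i _ _ => Nat.cast_nonneg (w i))
          have h5 : ∑ i, (w i:ℝ) = q := by
            rw [hqdef, ← hwsum]
            push_cast
            rfl
          linarith
        have h6 : (F.card:ℝ) * ((2*q)/N) ≤ q := le_trans h2 h3
        rw [div_eq_mul_inv] at h6
        have h7 : (F.card:ℝ) * (2*q) ≤ q * N := by
          have := mul_le_mul_of_nonneg_right h6 hN0.le
          calc (F.card:ℝ) * (2*q) = (F.card:ℝ) * (2*q*N⁻¹) * N := by
                field_simp
            _ ≤ q * N := this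
        have h9 : 2*(F.card:ℝ) ≤ N := le_of_mul_le_mul_right (by linarith only [h7]) hqpos
        linarith only [h9]
    have hGF : G.card + F.card = n := by
      rw [hG, hF]
      rw [Finset.card_filter_add_card_filter_not]
      exact Finset.card_univ.trans (Fintype.card_fin n)
    have hGc : M ≤ (G.card : ℝ) := by
      have hc : (G.card:ℝ) + (F.card:ℝ) = N := by
        rw [hN]
        exact_mod_cast hGF
      linarith only [hc, hMN2, hFle]
    rw [hMdef] at hGc
    exact_mod_cast hGc
  obtain ⟨S, hSG, hScard⟩ := Finset.exists_subset_card_eq hmG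
  -- the planted matrix A and its observed part B
  obtain ⟨A, hAdef⟩ : ∃ A' : Matrix (Fin n) (Fin n) ℝ,
      A' = Matrix.of (fun i (_ : Fin n) => if i ∈ S then (1:ℝ) else 0) := ⟨_, rfl⟩
  obtain ⟨B, hBdef⟩ : ∃ B' : Matrix (Fin n) (Fin n) ℝ,
      B' = Matrix.of (fun i j => if (i, j) ∈ Q then A i j else 0) := ⟨_, rfl⟩
  have hAentry : ∀ i j, A i j = if i ∈ S then (1:ℝ) else 0 := fun i j => by rw [hAdef]; rfl
  have hBentry : ∀ i j, B i j = if (i,j) ∈ Q then A i j else 0 := fun i j => by rw [hBdef]; rfl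
  have hAbnd : ∀ i j, |A i j| ≤ 1 := by
    intro i j; rw [hAentry]; split <;> norm_num
  have hBbnd : ∀ i j, |B i j| ≤ 1 := by
    intro i j; rw [hBentry i j]
    split
    · exact hAbnd i j
    · norm_num
  have hagree : f A = f B := by
    apply hdep
    intro p hp
    rw [hBentry p.1 p.2, if_pos (show (p.1, p.2) ∈ Q from by rwa [Prod.mk.eta])]
  have hAsq : ∑ i, ∑ j, (A i j)^2 = M * N := by
    have hrow : ∀ i : Fin n, ∑ j : Fin n, (A i j)^2 = if i ∈ S then N else 0 := by
      intro i
      by_cases hi : i ∈ S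
      · rw [if_pos hi, hN]
        simp [hAentry, hi]
      · rw [if_neg hi]
        apply Finset.sum_eq_zero
        intro j _
        rw [hAentry, if_neg hi]
        ring
    rw [Finset.sum_congr rfl (fun i _ => hrow i), Finset.sum_ite_mem, Finset.univ_inter,
      Finset.sum_const, hScard, nsmul_eq_mul, hMdef]
  have hBsupp : ∀ i j, i ∉ S → B i j = 0 := by
    intro i j hi
    rw [hBentry, hAentry, if_neg hi]
    simp
  have hBsq : ∑ i, ∑ j, (B i j)^2 ≤ M * (2*q) / N := by
    have hrowB : ∀ i : Fin n, ∑ j : Fin n, (B i j)^2 ≤ if i ∈ S then ((w i : ℝ)) else 0 := by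
      intro i
      by_cases hi : i ∈ S
      · rw [if_pos hi]
        have hwr : ((w i : ℝ)) = ∑ j, (if (i, j) ∈ Q then (1:ℝ) else 0) := by
          rw [hw, QLB.row_count Q i]
        rw [hwr]
        apply Finset.sum_le_sum
        intro j _
        rw [hBentry, hAentry, if_pos hi]
        by_cases hq : (i,j) ∈ Q <;> simp [hq]
      · rw [if_neg hi]
        apply le_of_eq
        apply Finset.sum_eq_zero
        intro j _
        rw [hBsupp i j hi]
        ring
    calc ∑ i, ∑ j, (B i j)^2 ≤ ∑ i, (if i ∈ S then ((w i:ℝ)) else 0) := by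
          exact Finset.sum_le_sum (fun i _ => hrowB i)
      _ = ∑ i ∈ S, (w i : ℝ) := by rw [Finset.sum_ite_mem, Finset.univ_inter]
      _ ≤ ∑ i ∈ S, (2*q)/N := by
          apply Finset.sum_le_sum
          intro i hi
          have hiG := hSG hi
          rw [hG, Finset.mem_filter] at hiG
          exact (le_div_iff₀ hN0).mpr hiG.2
      _ = M * ((2*q)/N) := by rw [Finset.sum_const, hScard, nsmul_eq_mul, hMdef]
      _ = M * (2*q) / N := by ring
  -- rank bounds
  have hArank : A.rank ≤ 1 := by rw [hAdef]; exact QLB.rank_indicator_le_one S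
  have hBrank : B.rank ≤ m := by
    have h := QLB.rank_le_card_support S B hBsupp
    rwa [hScard] at h
  -- spectral bounds
  have h_svalA : Real.sqrt (M*N) ≤ sval A 1 := by
    have h := QLB.frob_le_sval_one_of_rank_le_one hn1 A hArank
    rwa [hAsq] at h
  have h_svalB : sval B 1 ≤ Real.sqrt (∑ i, ∑ j, (B i j)^2) := QLB.sval_one_le_frob hn1 B
  have hMN : M ≤ N := le_trans hMN2 (by linarith only [hN0])
  have h_nucA : nuclearNorm A ≤ N := by
    have h := QLB.nuclearNorm_le_sqrt_rank_mul_frob A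
    rw [hAsq] at h
    have hr1 : (A.rank:ℝ) ≤ 1 := by exact_mod_cast hArank
    have h2 : (A.rank:ℝ) * (M*N) ≤ N*N := by
      have hMN' : M*N ≤ N*N := mul_le_mul_of_nonneg_right hMN hN0.le
      have hMN0 : (0:ℝ) ≤ M*N := by positivity
      nlinarith only [hr1, hMN', hMN0, (Nat.cast_nonneg A.rank : (0:ℝ) ≤ (A.rank:ℝ))]
    calc nuclearNorm A ≤ _ := h
      _ ≤ Real.sqrt (N*N) := Real.sqrt_le_sqrt h2
      _ = N := Real.sqrt_mul_self hN0.le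
  have h_nucB : nuclearNorm B ≤ Real.sqrt M * Real.sqrt (∑ i, ∑ j, (B i j)^2) := by
    have h := QLB.nuclearNorm_le_sqrt_rank_mul_frob B
    have h2 : ((B.rank:ℝ)) * (∑ i, ∑ j, (B i j)^2) ≤ M * (∑ i, ∑ j, (B i j)^2) := by
      apply mul_le_mul_of_nonneg_right _ (QLB.frob_nonneg B)
      rw [hMdef]
      exact_mod_cast hBrank
    calc nuclearNorm B ≤ _ := h
      _ ≤ Real.sqrt (M * (∑ i, ∑ j, (B i j)^2)) := Real.sqrt_le_sqrt h2
      _ = Real.sqrt M * Real.sqrt (∑ i, ∑ j, (B i j)^2) := Real.sqrt_mul hM0.le _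
  -- abbreviations
  set x := Real.sqrt (∑ i, ∑ j, (B i j)^2) with hxdef
  have hx0 : 0 ≤ x := Real.sqrt_nonneg _
  have hx2 : x^2 = ∑ i, ∑ j, (B i j)^2 := Real.sq_sqrt (QLB.frob_nonneg B)
  clear_value x
  set u := Real.sqrt M with hudef
  have hu0 : 0 ≤ u := Real.sqrt_nonneg _
  have hu2 : u^2 = M := Real.sq_sqrt hM0.le
  clear_value u
  set P := Real.sqrt (M*N) with hPdef
  have hP0 : 0 ≤ P := Real.sqrt_nonneg _
  have hP2 : P^2 = M*N := Real.sq_sqrt (by positivity)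
  clear_value P
  -- the approximation chain
  have h1 := happrox A hAbnd
  rw [max_eq_left h_nucA] at h1
  have h2' := happrox B hBbnd
  have hmax : max N (nuclearNorm B) ≤ N + u * x :=
    max_le (le_add_of_nonneg_right (by positivity))
      (le_trans h_nucB (le_add_of_nonneg_left hN0.le))
  have hchain : P ≤ x + 2*ε*N + ε*(u*x) := by
    have ha1 : sval A 1 - f A ≤ ε*N := by
      have hb := (abs_le.mp h1).1
      linarith only [hb]
    have ha2 : f B - sval B 1 ≤ ε*(N + u*x) := by
      have h3 := le_trans (le_abs_self _) h2'
      have h4 : ε * max N (nuclearNorm B) ≤ ε * (N + u*x) :=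
        mul_le_mul_of_nonneg_left hmax hε0.le
      linarith only [h3, h4]
    calc P ≤ sval A 1 := h_svalA
      _ = (sval A 1 - f A) + (f B - sval B 1) + sval B 1 := by rw [hagree]; ring
      _ ≤ ε*N + ε*(N + u*x) + x := by linarith only [ha1, ha2, h_svalB]
      _ = x + 2*ε*N + ε*(u*x) := by ring
  -- numeric endgame
  have hε4 : (0:ℝ) < ε^4 := by positivity
  have hxsq : x^2 < N/(64*ε^2) := by
    have s3 : x^2 ≤ 16*ε^2*q := by
      rw [hx2]
      refine le_trans hBsq ?_
      rw [div_le_iff₀ hN0]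
      nlinarith only [hM3, hq0]
    have s4 : 16*ε^2*q < 16*ε^2*(1/1024*N/ε^4) := by
      exact mul_lt_mul_of_pos_left hcon (by positivity)
    have s5 : 16*ε^2*(1/1024*N/ε^4) = N/(64*ε^2) := by
      field_simp
      ring
    linarith only [s3, s4, s5]
  have hx_lt : x < s/(8*ε) := by
    apply QLB.lt_of_sq_lt_sq hx0 (by positivity)
    have : (s/(8*ε))^2 = N/(64*ε^2) := by
      rw [div_pow, mul_pow, hs2]
      norm_num
    rw [this]
    exact hxsq
  have hxεN : x < ε*N/8 := by
    apply lt_of_lt_of_le hx_lt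
    rw [div_le_div_iff₀ (by positivity) (by norm_num : (0:ℝ) < 8)]
    nlinarith only [hsleN, hε0]
  have hu_le : u ≤ 3*ε*s := by
    apply QLB.le_of_sq_le_sq hu0 (by positivity)
    rw [hu2]
    calc M ≤ 8*ε^2*N := hM3
      _ = 8*ε^2*s^2 := by rw [hs2]
      _ ≤ (3*ε*s)^2 := by nlinarith only [sq_nonneg (ε*s)]
  have hux : ε*(u*x) ≤ (3/8)*ε*N := by
    have hh1 : u*x ≤ (3*ε*s)*(s/(8*ε)) :=
      mul_le_mul hu_le hx_lt.le hx0 (by positivity)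
    have hh2 : (3*ε*s)*(s/(8*ε)) = (3/8)*s^2 := by
      field_simp
    have hh3 : u*x ≤ (3/8)*N := by
      rw [hh2, hs2] at hh1
      exact hh1
    calc ε*(u*x) ≤ ε*((3/8)*N) := mul_le_mul_of_nonneg_left hh3 hε0.le
      _ = (3/8)*ε*N := by ring
  have hPlow : (5/2)*ε*N ≤ P := by
    apply QLB.le_of_sq_le_sq (by positivity) hP0
    rw [hP2]
    nlinarith only [mul_le_mul_of_nonneg_right hM1 hN0.le, sq_nonneg (ε*N)]
  have hεN : 0 < ε*N := by positivity
  linarith only [hchain, hxεN, hux, hPlow]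
end

section
/- There is an absolute constant c > 0 such that the following holds for every n and every ε with 1/√n ≤ ε < 1/4. For every set S ⊆ [n]×[n] with |S| ≤ c·n/ε², letting 𝐒 ∈ {0,1}^{n×n} be the indicator matrix of S (𝐒_{ij} = 1 iff (i,j) ∈ S) and 𝟏 the n×n all-ones matrix, there is no real number σ̃ satisfying both |σ₁(𝟏) − σ̃| ≤ ε·max(n, ‖𝟏‖₁) and |σ₁(𝐒) − σ̃| ≤ ε·max(n, ‖𝐒‖₁). (This is the hard-instance pair underlying the Ω(n/ε²) lower bound for adaptive deterministic spectral norm approximation.) -/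
open Matrix BigOperators

/- ### Auxiliary lemmas -/

lemma trace_eq_sum_eigs {m : ℕ} {A : Matrix (Fin m) (Fin m) ℝ} (hA : A.IsHermitian) :
    ∑ j, hA.eigenvalues j = A.trace := by
  rw [hA.trace_eq_sum_eigenvalues]
  simp

lemma le_sort_top {m : ℕ} (hm : 1 ≤ m) (f : Fin m → ℝ) (j : Fin m) :
    f j ≤ (f ∘ Tuple.sort f) ⟨m - 1, by omega⟩ := by
  have h := Tuple.monotone_sort f
  have hj : f j = (f ∘ Tuple.sort f) ((Tuple.sort f)⁻¹ j) := by simp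
  rw [hj]
  apply h
  rw [Fin.le_def]
  have := ((Tuple.sort f)⁻¹ j).isLt
  simp only []
  omega

lemma eigs_nonneg {m : ℕ} (A : Matrix (Fin m) (Fin m) ℝ) (j : Fin m) :
    0 ≤ (Matrix.isHermitian_conjTranspose_mul_self A).eigenvalues j := by
  have h : (Aᵀ * A).PosSemidef := by
    have := Matrix.posSemidef_conjTranspose_mul_self A
    rwa [Matrix.conjTranspose_eq_transpose_of_trivial] at this
  exact h.eigenvalues_nonneg j

lemma allOnes_eig_mem {n : ℕ} (j : Fin n) :
    (Matrix.isHermitian_conjTranspose_mul_self (allOnes n)).eigenvalues j = 0 ∨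
    (Matrix.isHermitian_conjTranspose_mul_self (allOnes n)).eigenvalues j = (n : ℝ) ^ 2 := by
  set hH := Matrix.isHermitian_conjTranspose_mul_self (allOnes n) with hHdef
  set lam := hH.eigenvalues j with hlam
  by_cases h0 : lam = 0
  · exact Or.inl h0
  right
  have hv := hH.mulVec_eigenvectorBasis j
  set v : Fin n → ℝ := ⇑(hH.eigenvectorBasis j) with hvdef
  have hmv : ∀ i, (n : ℝ) * (∑ k, v k) = lam * v i := by
    intro i
    have hentry : ∀ a b, ((allOnes n)ᴴ * allOnes n) a b = (n : ℝ) := by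
      intro a b; simp [Matrix.mul_apply, allOnes]
    have := congrFun hv i
    simp only [Matrix.mulVec, dotProduct, hentry] at this
    simp [Finset.mul_sum] at this ⊢; exact this
  have hvnorm : ‖hH.eigenvectorBasis j‖ = 1 := hH.eigenvectorBasis.orthonormal.1 j
  have hcoe : ∀ x, hH.eigenvectorBasis j x = v x := fun _ => rfl
  have hvne : ∃ i, v i ≠ 0 := by
    by_contra hc
    push_neg at hc
    have : ‖hH.eigenvectorBasis j‖ = 0 := by
      rw [EuclideanSpace.norm_eq]
      have : ∀ x, hH.eigenvectorBasis j x = 0 := fun x => by rw [hcoe x, hc x]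
      have h4 : ∑ x, ‖(hH.eigenvectorBasis j).ofLp x‖ ^ 2 = 0 :=
        Finset.sum_eq_zero (fun x _ => by rw [this x]; simp)
      exact (congrArg Real.sqrt h4).trans Real.sqrt_zero
    rw [hvnorm] at this
    norm_num at this
  set s := ∑ k, v k with hs
  have hvi : ∀ i, v i = (n : ℝ) * s / lam := by
    intro i
    field_simp
    linarith [hmv i]
  have hsne : s ≠ 0 := by
    intro hczero
    obtain ⟨i, hi⟩ := hvne
    apply hi
    rw [hvi i, hczero]
    simp
  have hseq : s = (n : ℝ) * ((n : ℝ) * s / lam) := by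
    rw [hs]
    calc ∑ k, v k = ∑ _k : Fin n, (n : ℝ) * s / lam :=
          Finset.sum_congr rfl (fun k _ => hvi k)
      _ = (n : ℝ) * ((n : ℝ) * s / lam) := by
          rw [Finset.sum_const]
          rw [Finset.card_univ, Fintype.card_fin, nsmul_eq_mul]
  have hls : lam * s = (n : ℝ) ^ 2 * s := by
    field_simp at hseq
    rw [hseq]
  have := mul_right_cancel₀ hsne hls
  linarith

lemma allOnes_eig_sum (n : ℕ) :
    ∑ j, (Matrix.isHermitian_conjTranspose_mul_self (allOnes n)).eigenvalues j = (n : ℝ) ^ 2 := by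
  rw [trace_eq_sum_eigs]
  have : ((allOnes n)ᴴ * allOnes n).trace = ∑ j : Fin n, (n : ℝ) := by
    apply Finset.sum_congr rfl
    intro j _
    simp [Matrix.mul_apply, allOnes]
  rw [this, Finset.sum_const]
  simp [pow_two]

lemma allOnes_nuclear (n : ℕ) (hn : 1 ≤ n) : nuclearNorm (allOnes n) = (n : ℝ) := by
  have key : (n : ℝ) * nuclearNorm (allOnes n) = (n : ℝ) ^ 2 := by
    rw [nuclearNorm, Finset.mul_sum, ← allOnes_eig_sum n]
    apply Finset.sum_congr rfl
    intro j _
    rcases allOnes_eig_mem j with h | h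
    · rw [svRaw, h]; simp
    · rw [svRaw, h, show ((n:ℝ))^2 = (n:ℝ)*(n:ℝ) from pow_two _,
        Real.sqrt_mul_self (by positivity)]
  have hn0 : (n : ℝ) ≠ 0 := by positivity
  have key2 : (n : ℝ) * nuclearNorm (allOnes n) = (n : ℝ) * (n : ℝ) := by
    rw [key]; ring
  exact mul_left_cancel₀ hn0 key2

lemma allOnes_sval_ge (n : ℕ) (hn : 1 ≤ n) : (n : ℝ) ≤ sval (allOnes n) 1 := by
  have hex : ∃ j : Fin n, (Matrix.isHermitian_conjTranspose_mul_self (allOnes n)).eigenvalues j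
      = (n : ℝ) ^ 2 := by
    by_contra hc
    push_neg at hc
    have hz : ∀ j, (Matrix.isHermitian_conjTranspose_mul_self (allOnes n)).eigenvalues j = 0 := by
      intro j
      rcases allOnes_eig_mem j with h | h
      · exact h
      · exact absurd h (hc j)
    have := allOnes_eig_sum n
    rw [Finset.sum_eq_zero (fun j _ => hz j)] at this
    have : (n : ℝ) ^ 2 = 0 := this.symm
    have hn0 : (0:ℝ) < n := by exact_mod_cast hn
    nlinarith
  obtain ⟨j, hj⟩ := hex
  have hsv : svRaw (allOnes n) j = (n : ℝ) := by
    rw [svRaw, hj, show ((n:ℝ))^2 = (n:ℝ)*(n:ℝ) from pow_two _,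
      Real.sqrt_mul_self (by positivity)]
  rw [sval, dif_pos ⟨le_refl 1, hn⟩]
  calc (n : ℝ) = svRaw (allOnes n) j := hsv.symm
    _ ≤ _ := le_sort_top hn (svRaw (allOnes n)) j

/-- **Hard instance pair for adaptive deterministic spectral norm approximation.**
For a small set `S` of positions, no single value `σ̃` can approximate the top singular
value of both the all-ones matrix and the indicator matrix of `S` to error
`ε · max(n, ‖·‖₁)`. -/
theorem adaptive_lower_bound_hard_pair :
    ∃ c : ℝ, 0 < c ∧ ∀ n : ℕ, 1 ≤ n → ∀ ε : ℝ,
      1 / Real.sqrt n ≤ ε → ε < 1 / 4 →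
      ∀ S : Finset (Fin n × Fin n), (S.card : ℝ) ≤ c * n / ε ^ 2 →
        ¬ ∃ σ : ℝ,
          |sval (allOnes n) 1 - σ| ≤ ε * max (n : ℝ) (nuclearNorm (allOnes n)) ∧
          |sval (Matrix.of fun i j => if (i, j) ∈ S then (1 : ℝ) else 0) 1 - σ| ≤
            ε * max (n : ℝ)
              (nuclearNorm (Matrix.of fun i j => if (i, j) ∈ S then (1 : ℝ) else 0)) := by
  refine ⟨1/16, by norm_num, ?_⟩
  intro n hn ε hε1 hε2 S hS
  rintro ⟨σ, h1, h2⟩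
  set N : ℝ := (n : ℝ) with hNdef
  have hN1 : (1 : ℝ) ≤ N := by rw [hNdef]; exact_mod_cast hn
  have hN0 : (0 : ℝ) < N := by linarith
  -- ε is positive
  have hsN : (0 : ℝ) < Real.sqrt N := Real.sqrt_pos.mpr hN0
  have hεpos : 0 < ε := lt_of_lt_of_le (by positivity) hε1
  have hε2pos : 0 < ε ^ 2 := by positivity
  -- 1 ≤ N * ε^2
  have hNe : 1 ≤ N * ε ^ 2 := by
    have h1' : 1 ≤ ε * Real.sqrt N := by
      rw [div_le_iff₀ hsN] at hε1
      linarith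
    nlinarith [Real.sq_sqrt hN0.le, Real.sqrt_nonneg N]
  -- card * ε^2 ≤ N/16
  have hcard0 : (0 : ℝ) ≤ (S.card : ℝ) := Nat.cast_nonneg _
  have hcard' : (S.card : ℝ) * ε ^ 2 ≤ N / 16 := by
    rw [le_div_iff₀ hε2pos] at hS
    linarith
  set B : Matrix (Fin n) (Fin n) ℝ := Matrix.of fun i j => if (i, j) ∈ S then (1 : ℝ) else 0
    with hBdef
  -- trace of Bᴴ * B is card S
  have htr : ∑ j, (Matrix.isHermitian_conjTranspose_mul_self B).eigenvalues j = (S.card : ℝ) := by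
    rw [trace_eq_sum_eigs]
    have hdiag : ∀ j, (Bᴴ * B) j j = ∑ i, (if (i, j) ∈ S then (1:ℝ) else 0) := by
      intro j
      rw [Matrix.mul_apply]
      apply Finset.sum_congr rfl
      intro i _
      by_cases h : (i, j) ∈ S <;> simp [hBdef, Matrix.conjTranspose_apply, h]
    rw [Matrix.trace]
    calc ∑ j, (Bᴴ * B).diag j = ∑ j, ∑ i, (if (i, j) ∈ S then (1:ℝ) else 0) := by
          apply Finset.sum_congr rfl; intro j _; exact hdiag j
      _ = ∑ i, ∑ j, (if (i, j) ∈ S then (1:ℝ) else 0) := Finset.sum_comm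
      _ = ∑ p : Fin n × Fin n, (if p ∈ S then (1:ℝ) else 0) := by
          rw [Fintype.sum_prod_type]
      _ = (S.card : ℝ) := by
          rw [Finset.sum_ite_mem, Finset.univ_inter, Finset.sum_const]
          simp
  -- each eigenvalue of Bᴴ B is at most card S
  have hlamB : ∀ j, (Matrix.isHermitian_conjTranspose_mul_self B).eigenvalues j ≤ (S.card : ℝ) := by
    intro j
    rw [← htr]
    exact Finset.single_le_sum (fun k _ => eigs_nonneg B k) (Finset.mem_univ j)
  -- sval B 1 ≤ N/4
  have hcardN : (S.card : ℝ) ≤ (N / 4) ^ 2 := by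
    nlinarith [mul_nonneg hcard0 (sub_nonneg.mpr hNe),
      mul_le_mul_of_nonneg_left hcard' hN0.le]
  have hsvalB : sval B 1 ≤ N / 4 := by
    rw [sval, dif_pos ⟨le_refl 1, hn⟩]
    set k := Tuple.sort (svRaw B) ⟨n - 1, by omega⟩ with hk
    have : (svRaw B ∘ Tuple.sort (svRaw B)) ⟨n - 1, by omega⟩ = svRaw B k := rfl
    rw [this, svRaw]
    calc Real.sqrt ((Matrix.isHermitian_conjTranspose_mul_self B).eigenvalues k)
        ≤ Real.sqrt ((N / 4) ^ 2) := Real.sqrt_le_sqrt (le_trans (hlamB k) hcardN)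
      _ = N / 4 := Real.sqrt_sq (by positivity)
  -- nuclear norm of B ≤ N / (4 ε)
  have hnucB : nuclearNorm B ≤ N / (4 * ε) := by
    have hnn : 0 ≤ nuclearNorm B :=
      Finset.sum_nonneg fun j _ => Real.sqrt_nonneg _
    have hsq : (nuclearNorm B) ^ 2 ≤ N * (S.card : ℝ) := by
      rw [nuclearNorm]
      calc (∑ j, svRaw B j) ^ 2
          ≤ (Finset.univ.card : ℝ) * ∑ j, (svRaw B j) ^ 2 := by
            exact_mod_cast sq_sum_le_card_mul_sum_sq (s := (Finset.univ : Finset (Fin n)))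
              (f := svRaw B)
        _ = N * ∑ j, (svRaw B j) ^ 2 := by
            rw [Finset.card_univ, Fintype.card_fin]
        _ = N * ∑ j, (Matrix.isHermitian_conjTranspose_mul_self B).eigenvalues j := by
            congr 1
            apply Finset.sum_congr rfl
            intro j _
            rw [svRaw, Real.sq_sqrt (eigs_nonneg B j)]
        _ = N * (S.card : ℝ) := by rw [htr]
    have hb : N * (S.card : ℝ) ≤ (N / (4 * ε)) ^ 2 := by
      have : (N / (4 * ε)) ^ 2 = N ^ 2 / (16 * ε ^ 2) := by
        field_simp; ring
      rw [this, le_div_iff₀ (by positivity)]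
      nlinarith [mul_le_mul_of_nonneg_left hcard' hN0.le]
    calc nuclearNorm B = Real.sqrt ((nuclearNorm B) ^ 2) := (Real.sqrt_sq hnn).symm
      _ ≤ Real.sqrt ((N / (4 * ε)) ^ 2) := Real.sqrt_le_sqrt (le_trans hsq hb)
      _ = N / (4 * ε) := Real.sqrt_sq (by positivity)
  -- bound the right-hand sides
  have hεN : ε * N ≤ N / 4 := by nlinarith
  have hrhs2 : ε * max N (nuclearNorm B) ≤ N / 4 := by
    rw [mul_max_of_nonneg _ _ hεpos.le]
    apply max_le hεN
    calc ε * nuclearNorm B ≤ ε * (N / (4 * ε)) := by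
          apply mul_le_mul_of_nonneg_left hnucB hεpos.le
      _ = N / 4 := by field_simp
  have hrhs1 : ε * max N (nuclearNorm (allOnes n)) = ε * N := by
    rw [allOnes_nuclear n hn, max_self]
  -- derive the contradiction
  rw [hrhs1] at h1
  have hA := allOnes_sval_ge n hn
  have h1' := abs_le.mp h1
  have h2' := abs_le.mp (le_trans h2 hrhs2)
  have h2'' : |sval B 1 - σ| ≤ N / 4 := le_trans h2 hrhs2
  have h2l := (abs_le.mp h2'').1
  have h2r := (abs_le.mp h2'').2
  have hσhi : σ ≤ N / 2 := by linarith [hsvalB, h2l]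
  have hσlo : 3 * N / 4 ≤ σ := by
    have := h1'.2
    linarith [hA, hεN]
  linarith
end

section
/- Let ε ∈ (0,1). Let A ∈ {−1,0,1}^{n×n} be positive semidefinite, and write A = Σ_{i=1}^p vᵢvᵢᵀ where v₁,…,v_p ∈ {−1,0,1}ⁿ have pairwise disjoint supports; let Sᵢ = supp(vᵢ) and λᵢ = |Sᵢ|. Let G be a simple graph on vertex set [n] such that any two disjoint subsets of vertices, each of size at least (ε/6)n, are joined by at least one edge. Let Ḡ be the simple graph on [n] with an edge {i,j} if and only if {i,j} is an edge of G and |A_{ij}| = 1. For each i, let Cᵢ be the vertex set of a largest connected component of the induced subgraph of Ḡ on Sᵢ. Then λᵢ − (ε/2)n < |Cᵢ| ≤ λᵢ. -/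
open Matrix BigOperators

/-- The union of the supports of a set `T` of connected components of `G`. -/
def compUnion {V : Type*} (G : SimpleGraph V) (T : Set G.ConnectedComponent) : Set V :=
  {x | G.connectedComponentMk x ∈ T}

/-- **Approximate block recovery via sampled connected components.** Let `A` be PSD with
entries in {−1,0,1}, written as `A = Σ vᵢvᵢᵀ` with sign vectors of pairwise disjoint
supports `Sᵢ` of sizes `λᵢ`. If `G` is `(ε/6)n`-expanding, `Ḡ` keeps the edges of `G`
where `|A_{ij}| = 1`, and `Cᵢ` is a largest connected component of `Ḡ` induced on `Sᵢ`,
then `λᵢ − (ε/2)n < |Cᵢ| ≤ λᵢ`. -/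

theorem expander_component_recovery
    (n : ℕ) (ε : ℝ) (hε : ε ∈ Set.Ioo (0 : ℝ) 1)
    (A : Matrix (Fin n) (Fin n) ℝ) (hA : A.PosSemidef)
    (hent : ∀ i j, A i j = -1 ∨ A i j = 0 ∨ A i j = 1)
    (p : ℕ) (v : Fin p → (Fin n → ℝ))
    (hv : ∀ i t, v i t = -1 ∨ v i t = 0 ∨ v i t = 1)
    (hdisj : ∀ i j, i ≠ j → ∀ t, v i t = 0 ∨ v j t = 0)
    (hAv : A = ∑ i, Matrix.vecMulVec (v i) (v i))
    (G Gbar : SimpleGraph (Fin n))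
    (hexp : ∀ X Y : Set (Fin n), Disjoint X Y →
      ε / 6 * n ≤ X.ncard → ε / 6 * n ≤ Y.ncard → ∃ x ∈ X, ∃ y ∈ Y, G.Adj x y)
    (hGbar : ∀ i j, Gbar.Adj i j ↔ G.Adj i j ∧ |A i j| = 1)
    (i : Fin p) (C : Set (Fin n))
    (hC : ∃ c : (Gbar.induce {t | v i t ≠ 0}).ConnectedComponent,
      C = Subtype.val '' c.supp)
    (hmax : ∀ C' : Set (Fin n),
      (∃ c : (Gbar.induce {t | v i t ≠ 0}).ConnectedComponent,
        C' = Subtype.val '' c.supp) → C'.ncard ≤ C.ncard) :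
    (({t | v i t ≠ 0} : Set (Fin n)).ncard : ℝ) - ε / 2 * n < (C.ncard : ℝ) ∧
    C.ncard ≤ ({t | v i t ≠ 0} : Set (Fin n)).ncard := by
  classical
  set S : Set (Fin n) := {t | v i t ≠ 0} with hSdef
  set G' := Gbar.induce S with hG'def
  obtain ⟨c, hCc⟩ := hC
  have hCsub : C ⊆ S := by
    rw [hCc]; rintro _ ⟨x, hx, rfl⟩; exact x.2
  have hub : C.ncard ≤ S.ncard := Set.ncard_le_ncard hCsub S.toFinite
  refine ⟨?_, hub⟩
  by_contra hlt
  push_neg at hlt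
  -- hlt : (C.ncard : ℝ) ≤ S.ncard - ε/2 * n
  obtain ⟨x₀, -⟩ := c.exists_rep
  have hn : 0 < n := x₀.1.pos
  have hnR : (0:ℝ) < n := by exact_mod_cast hn
  have hεnn : (0:ℝ) ≤ ε * n := mul_nonneg hε.1.le hnR.le
  have hCnn : (0:ℝ) ≤ C.ncard := Nat.cast_nonneg _
  -- entries of A on S × S have absolute value 1
  have hAabs : ∀ s t : Fin n, s ∈ S → t ∈ S → |A s t| = 1 := by
    intro s t hs ht
    have hst : A s t = v i s * v i t := by
      rw [hAv]
      simp only [Matrix.sum_apply, Matrix.vecMulVec_apply]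
      rw [Finset.sum_eq_single i]
      · intro j _ hj
        rcases hdisj j i hj s with h | h
        · rw [h, zero_mul]
        · exact absurd h hs
      · intro h; exact absurd (Finset.mem_univ i) h
    have habs1 : ∀ t' : Fin n, t' ∈ S → |v i t'| = 1 := by
      intro t' ht'
      rcases hv i t' with h | h | h
      · rw [h]; norm_num
      · exact absurd h ht'
      · rw [h]; norm_num
    rw [hst, abs_mul, habs1 s hs, habs1 t ht, mul_one]
  have hGG : ∀ s t : Fin n, s ∈ S → t ∈ S → G.Adj s t → Gbar.Adj s t :=
    fun s t hs ht h => (hGbar s t).2 ⟨h, hAabs s t hs ht⟩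
  -- dichotomy: a union of components and its complement cannot both be large
  have hdich : ∀ T : Set G'.ConnectedComponent,
      ¬ ((ε/6 * n ≤ ((compUnion G' T).ncard : ℝ)) ∧
         (ε/6 * n ≤ (((compUnion G' T)ᶜ).ncard : ℝ))) := by
    rintro T ⟨h1, h2⟩
    obtain ⟨a, ha, b, hb, hab⟩ := hexp (Subtype.val '' compUnion G' T)
      (Subtype.val '' (compUnion G' T)ᶜ)
      (Set.disjoint_image_of_injective Subtype.val_injective disjoint_compl_right)
      (by rwa [Set.ncard_image_of_injective _ Subtype.val_injective])
      (by rwa [Set.ncard_image_of_injective _ Subtype.val_injective])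
    obtain ⟨x, hx, rfl⟩ := ha
    obtain ⟨y, hy, rfl⟩ := hb
    have hadj : G'.Adj x y := hGG _ _ x.2 y.2 hab
    have heq : G'.connectedComponentMk x = G'.connectedComponentMk y :=
      SimpleGraph.ConnectedComponent.sound hadj.reachable
    exact hy (show G'.connectedComponentMk y ∈ T from heq ▸ hx)
  have hcard : (Set.univ : Set ↥S).ncard = S.ncard := by
    rw [Set.ncard_univ, Nat.card_coe_set_eq]
  have hsplit : ∀ T : Set G'.ConnectedComponent,
      (compUnion G' T).ncard + ((compUnion G' T)ᶜ).ncard = S.ncard := by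
    intro T
    rw [Set.ncard_add_ncard_compl, Nat.card_coe_set_eq]
  have hCcard : C.ncard = c.supp.ncard := by
    rw [hCc, Set.ncard_image_of_injective _ Subtype.val_injective]
  have hεn6 : ε/6 * n ≤ (S.ncard : ℝ) := by linarith
  set M : Set ℕ := {m | ∃ T : Set G'.ConnectedComponent,
      (compUnion G' T).ncard = m ∧ ε/6 * n ≤ (m : ℝ)} with hMdef
  have hMne : M.Nonempty := by
    refine ⟨(compUnion G' Set.univ).ncard, Set.univ, rfl, ?_⟩
    have hXu : compUnion G' Set.univ = Set.univ := by
      ext y; simp [compUnion]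
    rw [hXu, hcard]
    exact hεn6
  obtain ⟨T, hT, hTge⟩ := Nat.sInf_mem hMne
  have hXTpos : (compUnion G' T).Nonempty := by
    rw [← Set.ncard_pos]
    have : (0:ℝ) < ε/6 * n := by nlinarith [hε.1, hnR]
    rw [hT]
    exact_mod_cast lt_of_lt_of_le this hTge
  obtain ⟨x, hx⟩ := hXTpos
  set c₀ := G'.connectedComponentMk x with hc₀def
  have hc₀T : c₀ ∈ T := hx
  have hXT' : compUnion G' (T \ {c₀}) = compUnion G' T \ c₀.supp := by
    ext y
    simp only [compUnion, Set.mem_setOf_eq, Set.mem_diff, Set.mem_singleton_iff,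
      SimpleGraph.ConnectedComponent.mem_supp_iff]
  have hss : compUnion G' T \ c₀.supp ⊂ compUnion G' T :=
    (Set.ssubset_iff_of_subset Set.diff_subset).mpr ⟨x, hx, fun h => h.2 rfl⟩
  have hlt' : (((compUnion G' T \ c₀.supp).ncard : ℝ)) < ε/6 * n := by
    by_contra hcon
    push_neg at hcon
    have hmem : (compUnion G' T \ c₀.supp).ncard ∈ M := ⟨T \ {c₀}, by rw [hXT'], hcon⟩
    have h1 := Nat.sInf_le hmem
    have h2 : (compUnion G' T \ c₀.supp).ncard < (compUnion G' T).ncard :=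
      Set.ncard_lt_ncard hss (Set.toFinite _)
    omega
  have hcover : (compUnion G' T).ncard ≤ (compUnion G' T \ c₀.supp).ncard + c₀.supp.ncard :=
    calc (compUnion G' T).ncard
        ≤ ((compUnion G' T \ c₀.supp) ∪ c₀.supp).ncard :=
          Set.ncard_le_ncard (by rw [Set.diff_union_self]; exact Set.subset_union_left)
            (Set.toFinite _)
      _ ≤ _ := Set.ncard_union_le _ _
  have hsuppC : c₀.supp.ncard ≤ C.ncard := by
    have h := hmax (Subtype.val '' c₀.supp) ⟨c₀, rfl⟩
    rwa [Set.ncard_image_of_injective _ Subtype.val_injective] at h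
  have hcompl : ((((compUnion G' T)ᶜ).ncard : ℝ)) < ε/6 * n := by
    by_contra hcon
    push_neg at hcon
    exact hdich T ⟨by rw [hT]; exact hTge, hcon⟩
  have e1 : ((compUnion G' T).ncard : ℝ) + (((compUnion G' T)ᶜ).ncard : ℝ) = (S.ncard : ℝ) := by
    exact_mod_cast congrArg (Nat.cast : ℕ → ℝ) (hsplit T)
  have e2 : ((compUnion G' T).ncard : ℝ)
      ≤ ((compUnion G' T \ c₀.supp).ncard : ℝ) + (c₀.supp.ncard : ℝ) := by
    exact_mod_cast hcover
  have e3 : ((c₀.supp.ncard : ℕ) : ℝ) ≤ (C.ncard : ℝ) := by exact_mod_cast hsuppC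
  linarith
end

section
/- Let A ∈ ℝ^{n×n} be symmetric with ‖A‖∞ ≤ 1, let α ∈ (0,1) with 2/α ≤ n, and suppose σ₁(A) ≥ α·max(n, ‖A‖₁). Then there exists an index p with 1 ≤ p ≤ ⌈2/α⌉ − 1 such that σ_p(A)² − σ_{p+1}(A)² ≥ (3/8)·α³·(max(n, ‖A‖₁))². -/
open Matrix BigOperators

lemma sval_nonneg {m : ℕ} (A : Matrix (Fin m) (Fin m) ℝ) (i : ℕ) : 0 ≤ sval A i := by
  unfold sval
  split
  · exact Real.sqrt_nonneg _
  · exact le_refl 0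

lemma mul_sval_le {m : ℕ} (A : Matrix (Fin m) (Fin m) ℝ) {r : ℕ}
    (h1 : 1 ≤ r) (hr : r ≤ m) : (r : ℝ) * sval A r ≤ nuclearNorm A := by
  set g := svRaw A ∘ Tuple.sort (svRaw A) with hg
  have h0 : ∀ j, 0 ≤ g j := fun j => Real.sqrt_nonneg _
  have hnn : nuclearNorm A = ∑ j, g j := by
    rw [nuclearNorm, hg]
    exact (Equiv.sum_comp (Tuple.sort (svRaw A)) (svRaw A)).symm
  have hs : sval A r = g ⟨m - r, by omega⟩ := dif_pos ⟨h1, hr⟩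
  rw [hnn, hs]
  calc (r : ℝ) * g ⟨m - r, by omega⟩
      = ∑ _j ∈ Finset.Ici (⟨m - r, by omega⟩ : Fin m), g ⟨m - r, by omega⟩ := by
        rw [Finset.sum_const, Fin.card_Ici, nsmul_eq_mul]
        congr 2
        simp only [Fin.val_mk]
        omega
    _ ≤ ∑ j ∈ Finset.Ici (⟨m - r, by omega⟩ : Fin m), g j := by
        refine Finset.sum_le_sum fun j hj => ?_
        exact Tuple.monotone_sort (svRaw A) (Finset.mem_Ici.mp hj)
    _ ≤ ∑ j, g j :=
        Finset.sum_le_sum_of_subset_of_nonneg (Finset.subset_univ _) fun j _ _ => h0 j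


/-- **Existence gap theorem** -/
theorem singular_value_gap_exists
    (n : ℕ) (A : Matrix (Fin n) (Fin n) ℝ) (hA : A.IsSymm)
    (hbd : ∀ i j, |A i j| ≤ 1) (α : ℝ) (hα : α ∈ Set.Ioo (0 : ℝ) 1)
    (hn : 2 / α ≤ n)
    (hσ : α * max (n : ℝ) (nuclearNorm A) ≤ sval A 1) :
    ∃ p : ℕ, 1 ≤ p ∧ p ≤ ⌈(2 : ℝ) / α⌉₊ - 1 ∧
      (3 / 8) * α ^ 3 * (max (n : ℝ) (nuclearNorm A)) ^ 2 ≤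
        (sval A p) ^ 2 - (sval A (p + 1)) ^ 2 := by
  obtain ⟨hα0, hα1⟩ := hα
  set M := max (n : ℝ) (nuclearNorm A) with hM
  set c := (3 / 8) * α ^ 3 * M ^ 2 with hc
  by_contra hcon
  push_neg at hcon
  set k := ⌈(2 : ℝ) / α⌉₊ - 1 with hk
  have h2α : (2 : ℝ) < 2 / α := by
    rw [lt_div_iff₀ hα0]; nlinarith
  have hceil3 : 3 ≤ ⌈(2 : ℝ) / α⌉₊ := by
    have h : (2:ℕ) < ⌈(2 : ℝ) / α⌉₊ := Nat.lt_ceil.mpr (by exact_mod_cast h2α)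
    omega
  have hk1 : 1 ≤ k := by omega
  have hceil_le_n : ⌈(2 : ℝ) / α⌉₊ ≤ n := Nat.ceil_le.mpr hn
  have hkn : k + 1 ≤ n := by omega
  have hkcast : (k : ℝ) ≤ 2 / α := by
    have h := Nat.ceil_lt_add_one (by positivity : (0:ℝ) ≤ 2 / α)
    have : ((⌈(2 : ℝ) / α⌉₊ - 1 : ℕ) : ℝ) = (⌈(2 : ℝ) / α⌉₊ : ℝ) - 1 := by
      push_cast [Nat.cast_sub (by omega : 1 ≤ ⌈(2 : ℝ) / α⌉₊)]; ring
    rw [hk, this]; linarith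
  have hk1cast : 2 / α ≤ (k : ℝ) + 1 := by
    have h := Nat.le_ceil ((2 : ℝ) / α)
    have : ((k + 1 : ℕ) : ℝ) = (⌈(2 : ℝ) / α⌉₊ : ℝ) := by
      congr 1; omega
    push_cast at this
    linarith
  have hMn : (n : ℝ) ≤ M := le_max_left _ _
  have hM0 : 0 < M := by
    have : (0:ℝ) < 2 / α := by positivity
    linarith
  have hc0 : 0 < c := by rw [hc]; positivity
  -- telescoping
  have tel : sval A 1 ^ 2 - sval A (k + 1) ^ 2
      = ∑ p ∈ Finset.range k, (sval A (p + 1) ^ 2 - sval A (p + 1 + 1) ^ 2) :=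
    (Finset.sum_range_sub' (fun p => sval A (p + 1) ^ 2) k).symm
  have hlt : sval A 1 ^ 2 - sval A (k + 1) ^ 2 < (k : ℝ) * c := by
    rw [tel]
    calc ∑ p ∈ Finset.range k, (sval A (p + 1) ^ 2 - sval A (p + 1 + 1) ^ 2)
        < ∑ _p ∈ Finset.range k, c := by
          refine Finset.sum_lt_sum_of_nonempty (Finset.nonempty_range_iff.mpr (by omega))
            fun p hp => ?_
          have hpk := Finset.mem_range.mp hp
          exact hcon (p + 1) (by omega) (by omega)
      _ = (k : ℝ) * c := by rw [Finset.sum_const, nsmul_eq_mul, Finset.card_range]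
  have h1sq : α ^ 2 * M ^ 2 ≤ sval A 1 ^ 2 := by nlinarith [hσ, mul_pos hα0 hM0]
  have hkc : (k : ℝ) * c ≤ (3 / 4) * α ^ 2 * M ^ 2 := by
    have h1 : (k : ℝ) * c ≤ (2 / α) * c := mul_le_mul_of_nonneg_right hkcast hc0.le
    have h2 : (2 / α) * c = (3 / 4) * α ^ 2 * M ^ 2 := by
      rw [hc]; field_simp; ring
    linarith
  have hsq : α ^ 2 * M ^ 2 / 4 < sval A (k + 1) ^ 2 := by linarith
  have hhalf : α * M / 2 < sval A (k + 1) := by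
    nlinarith [sval_nonneg A (k + 1), mul_pos hα0 hM0]
  have hnuc : ((k : ℝ) + 1) * sval A (k + 1) ≤ nuclearNorm A := by
    have := mul_sval_le A (by omega : 1 ≤ k + 1) hkn
    push_cast at this
    linarith
  have hnM : nuclearNorm A ≤ M := le_max_right _ _
  have hfin : (2 / α) * (α * M / 2) = M := by field_simp
  have hA1 : ((k:ℝ) + 1) * (α * M / 2) < ((k:ℝ) + 1) * sval A (k + 1) :=
    mul_lt_mul_of_pos_left hhalf (by positivity)
  have hA2 : (2 / α) * (α * M / 2) ≤ ((k:ℝ) + 1) * (α * M / 2) :=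
    mul_le_mul_of_nonneg_right hk1cast (by positivity)
  linarith
end

section
/- Let ε ∈ (0,1), let A ∈ ℝ^{n×n} be symmetric with ‖A‖∞ ≤ 1, and let Ã ∈ ℝ^{n×n} be symmetric with ‖A − Ã‖₂ ≤ (ε/10)·max(n, ‖A‖₁). Let σ̃ > 0 satisfy (1 − ε/100)·‖Ã‖₂ ≤ σ̃ ≤ ‖Ã‖₂, and let B = I − (1/σ̃)·Ã. Then: (i) if A is positive semidefinite, ‖B‖₂ ≤ 1 + ε·max(n, ‖A‖₁)/(10σ̃); and (ii) if the smallest eigenvalue of A satisfies λ_min(A) ≤ −ε·max(n, ‖A‖₁), then ‖B‖₂ ≥ 1 + 9ε·max(n, ‖A‖₁)/(10σ̃). (This separation underlies deterministic PSD testing with ℓ∞-gap.) -/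
open Matrix BigOperators

section Aux

open RealInnerProductSpace

/-- A symmetric operator whose Rayleigh quotient is bounded by `C` has operator norm `≤ C`. -/
lemma opNorm_le_of_rayleigh {E : Type*} [NormedAddCommGroup E] [InnerProductSpace ℝ E]
    (T : E →L[ℝ] E) (hsymm : ∀ x y : E, ⟪T x, y⟫ = ⟪x, T y⟫)
    {C : ℝ} (hC : 0 ≤ C) (h : ∀ x : E, |⟪T x, x⟫| ≤ C * ‖x‖ ^ 2) :
    ‖T‖ ≤ C := by
  have key : ∀ x y : E, ⟪T x, y⟫ ≤ C / 2 * (‖x‖ ^ 2 + ‖y‖ ^ 2) := by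
    intro x y
    have h1 := (abs_le.mp (h (x + y))).2
    have h2 := (abs_le.mp (h (x - y))).1
    have e1 : ⟪T (x + y), x + y⟫
        = ⟪T x, x⟫ + ⟪T x, y⟫ + ⟪T y, x⟫ + ⟪T y, y⟫ := by
      rw [map_add]; rw [inner_add_left, inner_add_right, inner_add_right]; ring
    have e2 : ⟪T (x - y), x - y⟫
        = ⟪T x, x⟫ - ⟪T x, y⟫ - ⟪T y, x⟫ + ⟪T y, y⟫ := by
      rw [map_sub]; rw [inner_sub_left, inner_sub_right, inner_sub_right]; ring
    have e3 : ⟪T y, x⟫ = ⟪T x, y⟫ := by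
      rw [hsymm y x, real_inner_comm]
    have par := parallelogram_law_with_norm ℝ x y
    nlinarith [par]
  have key2 : ∀ x y : E, ⟪T x, y⟫ ≤ C * (‖x‖ * ‖y‖) := by
    intro x y
    rcases eq_or_lt_of_le (norm_nonneg x) with hx | hx
    · have : x = 0 := by rwa [eq_comm, norm_eq_zero] at hx
      simp [this]
    rcases eq_or_lt_of_le (norm_nonneg y) with hy | hy
    · have : y = 0 := by rwa [eq_comm, norm_eq_zero] at hy
      simp [this]
    set t : ℝ := Real.sqrt (‖y‖ / ‖x‖) with ht
    have htpos : 0 < t := Real.sqrt_pos.mpr (by positivity)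
    have ht2 : t ^ 2 = ‖y‖ / ‖x‖ := Real.sq_sqrt (by positivity)
    have := key (t • x) (t⁻¹ • y)
    rw [_root_.map_smul, inner_smul_left, inner_smul_right, norm_smul, norm_smul] at this
    have hinv : t * t⁻¹ = 1 := mul_inv_cancel₀ (ne_of_gt htpos)
    have h1 : ‖(t : ℝ)‖ = t := by rw [Real.norm_eq_abs, abs_of_pos htpos]
    have h2 : ‖t⁻¹‖ = t⁻¹ := by rw [Real.norm_eq_abs, abs_of_pos (inv_pos.mpr htpos)]
    rw [h1, h2] at this
    have e : t * (t⁻¹ * ⟪T x, y⟫) = ⟪T x, y⟫ := by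
      field_simp
    rw [starRingEnd_apply, star_trivial] at this
    have ht2' : t⁻¹ ^ 2 = ‖x‖ / ‖y‖ := by
      rw [inv_pow, ht2]
      rw [inv_div]
    calc (inner ℝ (T x) y : ℝ) = t * (t⁻¹ * inner ℝ (T x) y) := e.symm
      _ ≤ C / 2 * ((t * ‖x‖) ^ 2 + (t⁻¹ * ‖y‖) ^ 2) := this
      _ = C / 2 * (t ^ 2 * ‖x‖ ^ 2 + t⁻¹ ^ 2 * ‖y‖ ^ 2) := by ring
      _ = C * (‖x‖ * ‖y‖) := by
          rw [ht2, ht2']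
          field_simp
          ring
  refine T.opNorm_le_bound hC fun x => ?_
  rcases eq_or_lt_of_le (norm_nonneg (T x)) with hTx | hTx
  · rw [← hTx]; positivity
  · have := key2 x (T x)
    rw [real_inner_self_eq_norm_sq] at this
    nlinarith

variable {m : ℕ}

lemma specNorm_nonneg (M : Matrix (Fin m) (Fin m) ℝ) : 0 ≤ specNorm M := norm_nonneg _

/-- embed a plain vector into Euclidean space -/
noncomputable def eV {m : ℕ} (x : Fin m → ℝ) : EuclideanSpace ℝ (Fin m) :=
  (WithLp.equiv 2 (Fin m → ℝ)).symm x

lemma inner_eV (x y : Fin m → ℝ) : ⟪eV x, eV y⟫ = x ⬝ᵥ y := by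
  rw [eV, eV, EuclideanSpace.inner_eq_star_dotProduct]
  simp [dotProduct, mul_comm]

lemma toEuclideanLin_eV (M : Matrix (Fin m) (Fin m) ℝ) (x : Fin m → ℝ) :
    (LinearMap.toContinuousLinearMap (Matrix.toEuclideanLin M)) (eV x) = eV (M *ᵥ x) := by
  simp [eV]

lemma norm_eV_sq (x : Fin m → ℝ) : ‖eV x‖ ^ 2 = ∑ i, x i ^ 2 := by
  rw [eV, EuclideanSpace.norm_eq]
  rw [Real.sq_sqrt (by positivity)]
  simp [sq_abs]

lemma rayleigh_abs_le (M : Matrix (Fin m) (Fin m) ℝ) (x : Fin m → ℝ) :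
    |x ⬝ᵥ (M *ᵥ x)| ≤ specNorm M * ∑ i, x i ^ 2 := by
  have h1 : (M *ᵥ x) ⬝ᵥ x = x ⬝ᵥ (M *ᵥ x) := dotProduct_comm _ _
  rw [← h1, ← inner_eV, ← toEuclideanLin_eV]
  calc |⟪(LinearMap.toContinuousLinearMap (Matrix.toEuclideanLin M)) (eV x), eV x⟫|
      ≤ ‖(LinearMap.toContinuousLinearMap (Matrix.toEuclideanLin M)) (eV x)‖ * ‖eV x‖ :=
        abs_real_inner_le_norm _ _
    _ ≤ specNorm M * ‖eV x‖ * ‖eV x‖ := by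
        apply mul_le_mul_of_nonneg_right _ (norm_nonneg _)
        exact ContinuousLinearMap.le_opNorm _ _
    _ = specNorm M * ‖eV x‖ ^ 2 := by ring
    _ = specNorm M * ∑ i, x i ^ 2 := by rw [norm_eV_sq]

lemma specNorm_le_of_rayleigh (M : Matrix (Fin m) (Fin m) ℝ) (hM : M.IsSymm)
    {C : ℝ} (hC : 0 ≤ C) (h : ∀ x : Fin m → ℝ, |x ⬝ᵥ (M *ᵥ x)| ≤ C * ∑ i, x i ^ 2) :
    specNorm M ≤ C := by
  have hHerm : M.IsHermitian := by
    rw [Matrix.IsHermitian, Matrix.conjTranspose]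
    ext i j; simp [hM.apply i j]
  have hsym := (Matrix.isHermitian_iff_isSymmetric).mp hHerm
  apply opNorm_le_of_rayleigh _ _ hC
  · intro z
    obtain ⟨x, rfl⟩ := (WithLp.equiv 2 (Fin m → ℝ)).symm.surjective z
    have hx : (WithLp.equiv 2 (Fin m → ℝ)).symm x = eV x := rfl
    rw [hx, toEuclideanLin_eV, inner_eV, norm_eV_sq]
    have := h x
    rwa [dotProduct_comm] at this
  · intro z w
    exact hsym z w

lemma specNorm_zero_dim (M : Matrix (Fin 0) (Fin 0) ℝ) : specNorm M = 0 := by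
  rw [specNorm]
  rw [norm_eq_zero]
  ext x i
  exact i.elim0

end Aux

set_option maxHeartbeats 1000000 in
/-- **Separation underlying deterministic PSD testing with ℓ∞-gap.** Let `Ã` approximate
the symmetric bounded-entry matrix `A` to spectral error `(ε/10)·max(n,‖A‖₁)`, let
`(1 − ε/100)‖Ã‖₂ ≤ σ̃ ≤ ‖Ã‖₂` with `σ̃ > 0`, and let `B = I − Ã/σ̃`. If `A` is PSD then
`‖B‖₂ ≤ 1 + ε·max(n,‖A‖₁)/(10σ̃)`; if `λ_min(A) ≤ −ε·max(n,‖A‖₁)` then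
`‖B‖₂ ≥ 1 + 9ε·max(n,‖A‖₁)/(10σ̃)`. -/
theorem psd_testing_separation
    (n : ℕ) (ε : ℝ) (hε : ε ∈ Set.Ioo (0 : ℝ) 1)
    (A Atil : Matrix (Fin n) (Fin n) ℝ) (hA : A.IsSymm) (hAtil : Atil.IsSymm)
    (hbd : ∀ i j, |A i j| ≤ 1)
    (hclose : specNorm (A - Atil) ≤ ε / 10 * max (n : ℝ) (nuclearNorm A))
    (σt : ℝ) (hσpos : 0 < σt)
    (hσlo : (1 - ε / 100) * specNorm Atil ≤ σt) (hσhi : σt ≤ specNorm Atil) :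
    (A.PosSemidef →
      specNorm (1 - σt⁻¹ • Atil) ≤ 1 + ε * max (n : ℝ) (nuclearNorm A) / (10 * σt)) ∧
    (lamMin A ≤ -(ε * max (n : ℝ) (nuclearNorm A)) →
      1 + 9 * ε * max (n : ℝ) (nuclearNorm A) / (10 * σt) ≤
        specNorm (1 - σt⁻¹ • Atil)) := by
  obtain ⟨hε0, hε1⟩ := hε
  set M : ℝ := max (n : ℝ) (nuclearNorm A) with hMdef
  have hM0 : (0 : ℝ) ≤ M := le_trans (Nat.cast_nonneg n) (le_max_left _ _)
  clear_value M
  -- rule out n = 0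
  rcases Nat.eq_zero_or_pos n with hn0 | hn
  · exfalso
    subst hn0
    have : specNorm Atil = 0 := specNorm_zero_dim Atil
    linarith
  -- general facts
  have hB_symm : (1 - σt⁻¹ • Atil).IsSymm := by
    rw [Matrix.IsSymm] at hAtil ⊢
    rw [Matrix.transpose_sub, Matrix.transpose_smul, hAtil, Matrix.transpose_one]
  have hAtil_le : specNorm Atil ≤ σt / (1 - ε / 100) := by
    rw [le_div_iff₀ (by linarith)]
    linarith [hσlo]
  have hBdot : ∀ x : Fin n → ℝ,
      x ⬝ᵥ ((1 - σt⁻¹ • Atil) *ᵥ x) = (∑ i, x i ^ 2) - σt⁻¹ * (x ⬝ᵥ (Atil *ᵥ x)) := by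
    intro x
    rw [Matrix.sub_mulVec, Matrix.smul_mulVec, Matrix.one_mulVec,
      dotProduct_sub, dotProduct_smul]
    simp [dotProduct, pow_two]
  have hdiff : ∀ x : Fin n → ℝ,
      |x ⬝ᵥ (A *ᵥ x) - x ⬝ᵥ (Atil *ᵥ x)| ≤ (ε / 10 * M) * ∑ i, x i ^ 2 := by
    intro x
    have h1 := rayleigh_abs_le (A - Atil) x
    rw [Matrix.sub_mulVec, dotProduct_sub] at h1
    calc |x ⬝ᵥ (A *ᵥ x) - x ⬝ᵥ (Atil *ᵥ x)| ≤ specNorm (A - Atil) * ∑ i, x i ^ 2 := h1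
      _ ≤ (ε / 10 * M) * ∑ i, x i ^ 2 := by
          apply mul_le_mul_of_nonneg_right hclose (by positivity)
  constructor
  · -- part (i)
    intro hPSD
    have hC : (0 : ℝ) ≤ 1 + ε * M / (10 * σt) := by positivity
    apply specNorm_le_of_rayleigh _ hB_symm hC
    intro x
    set s := ∑ i, x i ^ 2 with hs
    have hs0 : 0 ≤ s := by positivity
    set q := x ⬝ᵥ (Atil *ᵥ x) with hq
    have hp : 0 ≤ x ⬝ᵥ (A *ᵥ x) := by
      have := hPSD.dotProduct_mulVec_nonneg x
      simpa using this
    have hq_lo : -(ε / 10 * M) * s ≤ q := by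
      have := (abs_le.mp (hdiff x)).2
      linarith
    have hq_hi : q ≤ σt / (1 - ε / 100) * s := by
      have h1 := (abs_le.mp (rayleigh_abs_le Atil x)).2
      calc q ≤ specNorm Atil * s := h1
        _ ≤ σt / (1 - ε / 100) * s := mul_le_mul_of_nonneg_right hAtil_le hs0
    rw [hBdot x, abs_le]
    constructor
    · -- lower bound
      have key : σt⁻¹ * q ≤ 2 * s := by
        have h2 : σt⁻¹ * q ≤ σt⁻¹ * (σt / (1 - ε / 100) * s) :=
          mul_le_mul_of_nonneg_left hq_hi (inv_pos.mpr hσpos).le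
        have h3 : σt⁻¹ * (σt / (1 - ε / 100) * s) = s / (1 - ε / 100) := by
          field_simp
        have h4 : s / (1 - ε / 100) ≤ 2 * s := by
          rw [div_le_iff₀ (by linarith)]
          nlinarith
        linarith
      have hεσ : 0 ≤ ε * M / (10 * σt) := by positivity
      nlinarith [mul_nonneg hεσ hs0]
    · -- upper bound
      have h5 : -(σt⁻¹ * q) ≤ σt⁻¹ * (ε / 10 * M) * s := by
        have := mul_le_mul_of_nonneg_left hq_lo (inv_pos.mpr hσpos).le
        nlinarith [this]
      have h6 : σt⁻¹ * (ε / 10 * M) = ε * M / (10 * σt) := by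
        rw [eq_div_iff (by positivity : (10:ℝ) * σt ≠ 0)]
        field_simp
      nlinarith [h5, h6]
  · -- part (ii)
    intro hlam
    set S : Set ℝ := {r : ℝ | ∃ x : Fin n → ℝ, vnorm x = 1 ∧ r = x ⬝ᵥ (A *ᵥ x)} with hS
    have hlam' : sInf S ≤ -(ε * M) := hlam
    have unit_sum : ∀ x : Fin n → ℝ, vnorm x = 1 → ∑ i, x i ^ 2 = 1 := by
      intro x hx
      rw [vnorm] at hx
      nlinarith [Real.sq_sqrt (show (0:ℝ) ≤ ∑ i, x i ^ 2 by positivity), hx]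
    have hSne : S.Nonempty := by
      refine ⟨(fun i => if i = ⟨0, hn⟩ then (1:ℝ) else 0) ⬝ᵥ
        (A *ᵥ fun i => if i = ⟨0, hn⟩ then (1:ℝ) else 0),
        fun i => if i = ⟨0, hn⟩ then (1:ℝ) else 0, ?_, rfl⟩
      rw [vnorm]
      have : ∑ i, ((if i = (⟨0, hn⟩ : Fin n) then (1:ℝ) else 0)) ^ 2 = 1 := by
        rw [Finset.sum_eq_single (⟨0, hn⟩ : Fin n)] <;> simp +contextual
      rw [this, Real.sqrt_one]
    have hSbdd : BddBelow S := by
      refine ⟨-specNorm A, fun r hr => ?_⟩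
      obtain ⟨x, hx1, rfl⟩ := hr
      have := (abs_le.mp (rayleigh_abs_le A x)).1
      rw [unit_sum x hx1, mul_one] at this
      exact this
    apply le_of_forall_pos_le_add
    intro δ hδ
    have hδσ : 0 < δ * σt := by positivity
    have hlt : sInf S < -(ε * M) + δ * σt := by linarith
    obtain ⟨r, hrS, hrlt⟩ := (csInf_lt_iff hSbdd hSne).mp hlt
    obtain ⟨x, hx1, rfl⟩ := hrS
    have hsum1 := unit_sum x hx1
    have hq_hi : x ⬝ᵥ (Atil *ᵥ x) < -(9 * ε * M / 10) + δ * σt := by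
      have := (abs_le.mp (hdiff x)).1
      rw [hsum1, mul_one] at this
      linarith
    have hB_val : x ⬝ᵥ ((1 - σt⁻¹ • Atil) *ᵥ x)
        = 1 - σt⁻¹ * (x ⬝ᵥ (Atil *ᵥ x)) := by
      rw [hBdot x, hsum1]
    have hB_le : x ⬝ᵥ ((1 - σt⁻¹ • Atil) *ᵥ x) ≤ specNorm (1 - σt⁻¹ • Atil) := by
      have := (abs_le.mp (rayleigh_abs_le (1 - σt⁻¹ • Atil) x)).2
      rwa [hsum1, mul_one] at this
    have hkey : 1 + 9 * ε * M / (10 * σt) - δ ≤ x ⬝ᵥ ((1 - σt⁻¹ • Atil) *ᵥ x) := by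
      rw [hB_val]
      have h7 : σt⁻¹ * (x ⬝ᵥ (Atil *ᵥ x)) ≤ σt⁻¹ * (-(9 * ε * M / 10) + δ * σt) :=
        mul_le_mul_of_nonneg_left (le_of_lt hq_hi) (inv_pos.mpr hσpos).le
      have h8 : σt⁻¹ * (-(9 * ε * M / 10) + δ * σt) = -(9 * ε * M / (10 * σt)) + δ := by
        field_simp
      linarith
    linarith
end
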